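/- Let G and K be nonempty finite sets (groups and clusters), let D ≥ 1 be a natural number (the per-cluster capacity, playing the role of ⌊1/α⌋), and let β : G → ℕ satisfy β_g ≤ |K| for every g ∈ G and ∑_{g ∈ G} β_g ≤ D·|K|. Then there exists a binary matrix x : G × K → {0,1} such that ∑_{k ∈ K} x_{g,k} ≥ β_g for every g ∈ G and ∑_{g ∈ G} x_{g,k} ≤ D for every k ∈ K. That is, the pre-fixing integer program that assigns to each group at least β_g distinct clusters, with at most D groups pre-fixed to any single cluster, is feasible under these conditions. -/

import Mathlib

open Finset

/-- The number of `j < D*n` with `j % n = r` is at most `D`. -/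
lemma count_mod_le (n D r : ℕ) (hn : 0 < n) :
    ((Finset.range (D * n)).filter (fun j => j % n = r)).card ≤ D := by
  classical
  have h := Finset.card_le_card_of_injOn (fun j => j / n)
    (s := (Finset.range (D * n)).filter (fun j => j % n = r))
    (t := Finset.range D) ?_ ?_
  · simpa using h
  · intro j hj
    simp only [Finset.mem_coe, Finset.mem_filter, Finset.mem_range] at hj ⊢
    exact Nat.div_lt_of_lt_mul (by rw [Nat.mul_comm] at hj; exact hj.1)
  · intro j1 h1 j2 h2 hdiv
    simp only [Finset.coe_filter, Set.mem_setOf_eq, Finset.mem_range] at h1 h2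
    have e1 := Nat.div_add_mod j1 n
    have e2 := Nat.div_add_mod j2 n
    simp only at hdiv
    rw [hdiv] at e1
    omega

/-- Injectivity of `· % n` on an interval of length at most `n`. -/
lemma mod_injOn_Ico (n a L : ℕ) (hL : L ≤ n) :
    Set.InjOn (· % n) (Finset.Ico a (a + L)) := by
  intro j1 h1 j2 h2 hmod
  simp only [Finset.coe_Ico, Set.mem_Ico] at h1 h2
  simp only at hmod
  rcases le_total j1 j2 with h | h
  · have : n ∣ j2 - j1 := (Nat.modEq_iff_dvd' h).mp hmod
    have := Nat.eq_zero_of_dvd_of_lt this (by omega)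
    omega
  · have : n ∣ j1 - j2 := (Nat.modEq_iff_dvd' h).mp hmod.symm
    have := Nat.eq_zero_of_dvd_of_lt this (by omega)
    omega

/-- Feasibility of the pre-fixing integer program: if each group demands at most
`|K|` clusters and the total demand is at most `D·|K|`, then there is a 0-1
assignment giving each group `g` at least `β g` distinct clusters with at most
`D` groups pre-fixed to any single cluster. -/
theorem prefix_ip_feasible {G K : Type*} [Fintype G] [Fintype K]
    [Nonempty G] [Nonempty K]
    (D : ℕ) (hD : 1 ≤ D) (β : G → ℕ)
    (hβK : ∀ g : G, β g ≤ Fintype.card K)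
    (hsum : ∑ g : G, β g ≤ D * Fintype.card K) :
    ∃ x : G → K → Bool,
      (∀ g : G, β g ≤ (Finset.univ.filter (fun k => x g k = true)).card) ∧
      (∀ k : K, (Finset.univ.filter (fun g => x g k = true)).card ≤ D) := by
  classical
  set n := Fintype.card K with hn
  set m := Fintype.card G with hm
  have hn0 : 0 < n := Fintype.card_pos
  obtain ⟨eG⟩ : Nonempty (G ≃ Fin m) := ⟨Fintype.equivFin G⟩
  obtain ⟨eK⟩ : Nonempty (K ≃ Fin n) := ⟨Fintype.equivFin K⟩
  set c : ℕ → ℕ := fun i => if h : i < m then β (eG.symm ⟨i, h⟩) else 0 with hc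
  set s : ℕ → ℕ := fun i => ∑ j ∈ Finset.range i, c j with hs
  have hcg : ∀ g : G, c (eG g).val = β g := by
    intro g
    simp only [hc]
    rw [dif_pos (eG g).isLt, Fin.eta, Equiv.symm_apply_apply]
  have hcle : ∀ i, c i ≤ n := by
    intro i
    simp only [hc]
    split
    · exact hβK _
    · exact Nat.zero_le _
  have hsmono : ∀ i j, i ≤ j → s i ≤ s j := by
    intro i j hij
    exact Finset.sum_le_sum_of_subset (Finset.range_subset_range.mpr hij)
  have hsucc : ∀ i, s (i + 1) = s i + c i := by
    intro i; exact Finset.sum_range_succ c i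
  have hstot : s m ≤ D * n := by
    have : s m = ∑ g : G, β g := by
      rw [hs]
      simp only
      rw [← Fin.sum_univ_eq_sum_range (fun i => c i) m]
      rw [← Equiv.sum_comp eG (fun i => c i.val)]
      apply Finset.sum_congr rfl
      intro g _
      exact hcg g
    omega
  -- the set of residues covered by group g
  set T : G → Finset ℕ := fun g =>
    (Finset.Ico (s (eG g).val) (s (eG g).val + c (eG g).val)).image (· % n) with hT
  refine ⟨fun g k => decide ((eK k).val ∈ T g), ?_, ?_⟩
  · -- each group gets at least β g clusters
    intro g
    have hTcard : (T g).card = β g := by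
      rw [hT]
      simp only
      rw [Finset.card_image_of_injOn (mod_injOn_Ico n _ _ (hcle _))]
      rw [Nat.card_Ico, hcg g]
      omega
    rw [← hTcard]
    apply Finset.card_le_card_of_injOn
      (fun r => eK.symm ⟨r % n, Nat.mod_lt _ hn0⟩)
    · intro r hr
      have hrn : r < n := by
        rw [hT] at hr
        simp only [Finset.mem_coe, Finset.mem_image] at hr
        obtain ⟨j, _, hj⟩ := hr
        rw [← hj]; exact Nat.mod_lt _ hn0
      simp only [Finset.mem_filter, Finset.mem_univ, true_and, decide_eq_true_eq,
        Equiv.apply_symm_apply]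
      simpa [Nat.mod_eq_of_lt hrn] using hr
    · intro r1 h1 r2 h2 heq
      have hr1 : r1 < n := by
        simp only [hT, Finset.coe_image, Set.mem_image] at h1
        obtain ⟨j, _, hj⟩ := h1
        rw [← hj]; exact Nat.mod_lt _ hn0
      have hr2 : r2 < n := by
        simp only [hT, Finset.coe_image, Set.mem_image] at h2
        obtain ⟨j, _, hj⟩ := h2
        rw [← hj]; exact Nat.mod_lt _ hn0
      have := congrArg (fun z => (eK z).val) heq
      simpa [Nat.mod_eq_of_lt hr1, Nat.mod_eq_of_lt hr2] using this
  · -- each cluster gets at most D groups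
    intro k
    set r := (eK k).val with hr
    have hrn : r < n := (eK k).isLt
    -- map each group covering k to the unique witness j
    have h := Finset.card_le_card_of_injOn
      (fun g : G => if h : ∃ j ∈ Finset.Ico (s (eG g).val) (s (eG g).val + c (eG g).val),
          j % n = r then h.choose else 0)
      (s := Finset.univ.filter (fun g => decide ((eK k).val ∈ T g) = true))
      (t := (Finset.range (D * n)).filter (fun j => j % n = r)) ?_ ?_
    · exact h.trans (count_mod_le n D r hn0)
    · intro g hg
      simp only [Finset.mem_coe, Finset.mem_filter, Finset.mem_univ, true_and, decide_eq_true_eq, hT,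
        Finset.mem_image] at hg
      have hex : ∃ j ∈ Finset.Ico (s (eG g).val) (s (eG g).val + c (eG g).val),
          j % n = r := by
        obtain ⟨j, hj1, hj2⟩ := hg
        exact ⟨j, hj1, hj2⟩
      beta_reduce
      rw [dif_pos hex]
      have key : ∀ j, j ∈ Finset.Ico (s (eG g).val) (s (eG g).val + c (eG g).val) →
          j % n = r → j ∈ (Finset.range (D * n)).filter (fun j => j % n = r) := by
        intro j hj hjr
        simp only [Finset.mem_Ico] at hj
        simp only [Finset.mem_filter, Finset.mem_range]
        have h1 : s (eG g).val + c (eG g).val = s ((eG g).val + 1) := (hsucc _).symm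
        have h2 : s ((eG g).val + 1) ≤ s m := hsmono _ _ (eG g).isLt
        exact ⟨by omega, hjr⟩
      exact key _ hex.choose_spec.1 hex.choose_spec.2
    · intro g1 hg1 g2 hg2 heq
      simp only [Finset.coe_filter, Set.mem_setOf_eq, Finset.mem_univ, true_and,
        decide_eq_true_eq, hT, Finset.mem_image] at hg1 hg2
      have hex1 : ∃ j ∈ Finset.Ico (s (eG g1).val) (s (eG g1).val + c (eG g1).val),
          j % n = r := by obtain ⟨j, hj1, hj2⟩ := hg1; exact ⟨j, hj1, hj2⟩
      have hex2 : ∃ j ∈ Finset.Ico (s (eG g2).val) (s (eG g2).val + c (eG g2).val),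
          j % n = r := by obtain ⟨j, hj1, hj2⟩ := hg2; exact ⟨j, hj1, hj2⟩
      beta_reduce at heq
      rw [dif_pos hex1, dif_pos hex2] at heq
      obtain ⟨hj1, _⟩ := hex1.choose_spec
      obtain ⟨hj2, _⟩ := hex2.choose_spec
      rw [heq] at hj1
      simp only [Finset.mem_Ico] at hj1 hj2
      -- the intervals for distinct indices are disjoint
      have hival : (eG g1).val = (eG g2).val := by
        by_contra hne
        rcases Nat.lt_or_ge (eG g1).val (eG g2).val with hlt | hge
        · have : s ((eG g1).val + 1) ≤ s (eG g2).val := hsmono _ _ hlt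
          rw [hsucc] at this
          omega
        · have hlt2 : (eG g2).val < (eG g1).val := by omega
          have : s ((eG g2).val + 1) ≤ s (eG g1).val := hsmono _ _ hlt2
          rw [hsucc] at this
          omega
      have : eG g1 = eG g2 := Fin.ext hival
      exact eG.injective this
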